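/- Let c ≥ 5 be a real constant and let n_1 = n, n_{l+1} = (log2 n_l)^{c-1}. Suppose m is an index such that n_l ≥ (c²+c)^{c-1} for all l ≤ m-1. Then for every i with 1 ≤ i ≤ m-1, m - i ≤ log2* n_i, where log2* x is the number of times log2 must be iteratively applied to x before the result is at most 1. -/

import Mathlib

/-- The iterated base-2 logarithm: the least number of times `log2` must be applied to `x`
before the result is at most `1`. -/
noncomputable def log2Star (x : ℝ) : ℕ := sInf {k : ℕ | (Real.logb 2)^[k] x ≤ 1}

lemma logb_le_half {x : ℝ} (hx : 4 ≤ x) : Real.logb 2 x ≤ x / 2 := by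
  have hlog2 : (0.6931:ℝ) ≤ Real.log 2 := by
    have := Real.log_two_gt_d9; linarith
  rw [Real.logb_le_iff_le_rpow one_lt_two (by linarith)]
  have h4 : ((2:ℝ) ^ ((2:ℝ)) : ℝ) = 4 := by
    rw [Real.rpow_two]; norm_num
  have key : (4:ℝ) * (1 + (x/2 - 2) * Real.log 2) ≤ (2:ℝ) ^ (x/2 : ℝ) := by
    have : (2:ℝ) ^ (x/2 : ℝ) = (2:ℝ) ^ (2:ℝ) * (2:ℝ) ^ (x/2 - 2 : ℝ) := by
      rw [← Real.rpow_add (by norm_num)]; ring_nf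
    rw [this, h4]
    have hexp : 1 + (x/2 - 2) * Real.log 2 ≤ (2:ℝ) ^ (x/2 - 2 : ℝ) := by
      rw [Real.rpow_def_of_pos (by norm_num)]
      have := Real.add_one_le_exp ((x/2 - 2) * Real.log 2)
      rw [mul_comm] at this
      linarith
    nlinarith
  nlinarith [Real.log_nonneg (by norm_num : (1:ℝ) ≤ 2)]

lemma exists_iter_le_one (x : ℝ) : ∃ k, (Real.logb 2)^[k] x ≤ 1 := by
  have aux : ∀ n : ℕ, ∀ x : ℝ, x ≤ n → ∃ k, (Real.logb 2)^[k] x ≤ 1 := by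
    intro n
    induction n with
    | zero => intro x hx; exact ⟨0, by simpa using hx.trans (by norm_num)⟩
    | succ n ih =>
      intro x hx
      by_cases hx1 : x ≤ 1
      · exact ⟨0, by simpa using hx1⟩
      · push_neg at hx1
        have hb : Real.logb 2 x ≤ n := by
          have h1 : Real.logb 2 x ≤ Real.logb 2 (n+1 : ℕ) := by
            apply Real.logb_le_logb_of_le one_lt_two (by linarith)
            exact_mod_cast hx
          have h2 : Real.logb 2 ((n+1 : ℕ) : ℝ) ≤ n := by
            rw [Real.logb_le_iff_le_rpow one_lt_two (by positivity)]
            rw [Real.rpow_natCast]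
            exact_mod_cast (Nat.lt_two_pow_self (n := n))
          linarith
        obtain ⟨k, hk⟩ := ih (Real.logb 2 x) hb
        exact ⟨k + 1, by rwa [Function.iterate_succ_apply]⟩
  obtain ⟨n, hn⟩ := exists_nat_ge x
  exact aux n x hn

theorem stmt4 (c : ℝ) (hc : 5 ≤ c) (n : ℝ) (nseq : ℕ → ℝ) (h1 : nseq 1 = n)
    (hrec : ∀ l, 1 ≤ l → nseq (l + 1) = Real.logb 2 (nseq l) ^ (c - 1))
    (m : ℕ) (hm : ∀ l, 1 ≤ l → l ≤ m - 1 → (c ^ 2 + c) ^ (c - 1) ≤ nseq l)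
    (i : ℕ) (hi : 1 ≤ i) (him : i ≤ m - 1) :
    m - i ≤ log2Star (nseq i) := by
  have hc1 : (4:ℝ) ≤ c - 1 := by linarith
  have hc1pos : (0:ℝ) < c - 1 := by linarith
  have hc1ne : (c - 1) ≠ 0 := ne_of_gt hc1pos
  have hcc : (30:ℝ) ≤ c^2 + c := by nlinarith
  set M := (c ^ 2 + c) ^ (c - 1) with hM
  have hM1 : (1:ℝ) ≤ M := by
    calc (1:ℝ) = 1 ^ (c-1) := (Real.one_rpow _).symm
    _ ≤ (c^2+c) ^ (c-1) := Real.rpow_le_rpow (by norm_num) (by linarith) (by linarith)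
  -- log of nseq l in terms of nseq (l+1)
  have hlog : ∀ l, 1 ≤ l → l ≤ m - 1 →
      Real.logb 2 (nseq l) = nseq (l+1) ^ (1/(c-1)) := by
    intro l hl hlm
    have hpos : 0 ≤ Real.logb 2 (nseq l) :=
      Real.logb_nonneg one_lt_two (le_trans hM1 (hm l hl hlm))
    rw [hrec l hl, ← Real.rpow_mul hpos, mul_one_div, div_self hc1ne, Real.rpow_one]
  -- key numeric fact
  have hnum : 2 * Real.logb 2 (c - 1) ≤ c - 1 := by
    have := logb_le_half hc1
    linarith
  -- the invariant
  have hA : ∀ k, 1 ≤ k → i + k ≤ m - 1 →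
      nseq (i+k) ^ (1/(c-1)) / (c-1)^2 ≤ (Real.logb 2)^[k] (nseq i) := by
    intro k hk
    induction k, hk using Nat.le_induction with
    | base =>
      intro h1m
      have hiter : (Real.logb 2)^[1] (nseq i) = nseq (i+1) ^ (1/(c-1)) := by
        rw [Function.iterate_one]
        exact hlog i hi (by omega)
      rw [hiter]
      have hX : 0 ≤ nseq (i+1) ^ (1/(c-1)) := Real.rpow_nonneg (by
        have := hm (i+1) (by omega) h1m; linarith) _
      apply div_le_self hX
      nlinarith
    | succ k hk ih =>
      intro h1m
      have hikm : i + k ≤ m - 1 := by omega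
      have Hk := ih hikm
      have ht : M ≤ nseq (i+k) := hm (i+k) (by omega) hikm
      have hs : M ≤ nseq (i+k+1) := hm (i+k+1) (by omega) (by omega)
      have htpos : (0:ℝ) < nseq (i+k) := by linarith
      have hupos : (0:ℝ) < nseq (i+k) ^ (1/(c-1)) := Real.rpow_pos_of_pos htpos _
      have hlbpos : (0:ℝ) < nseq (i+k) ^ (1/(c-1)) / (c-1)^2 := by positivity
      have hstep : (Real.logb 2)^[k+1] (nseq i) = Real.logb 2 ((Real.logb 2)^[k] (nseq i)) :=
        Function.iterate_succ_apply' _ _ _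
      rw [hstep]
      have hmono : Real.logb 2 (nseq (i+k) ^ (1/(c-1)) / (c-1)^2)
          ≤ Real.logb 2 ((Real.logb 2)^[k] (nseq i)) :=
        Real.logb_le_logb_of_le one_lt_two hlbpos Hk
      have hsplit : Real.logb 2 (nseq (i+k) ^ (1/(c-1)) / (c-1)^2)
          = (1/(c-1)) * Real.logb 2 (nseq (i+k)) - 2 * Real.logb 2 (c-1) := by
        rw [Real.logb_div (ne_of_gt hupos) (by positivity),
          Real.logb_rpow_eq_mul_logb_of_pos htpos, Real.logb_pow]
        norm_num
      have hlogt : Real.logb 2 (nseq (i+k)) = nseq (i+k+1) ^ (1/(c-1)) :=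
        hlog (i+k) (by omega) hikm
      set u := nseq (i+k+1) ^ (1/(c-1)) with hu
      have hularge : c^2 + c ≤ u := by
        have : ((c^2+c) ^ (c-1)) ^ (1/(c-1)) ≤ nseq (i+k+1) ^ (1/(c-1)) :=
          Real.rpow_le_rpow (Real.rpow_nonneg (by linarith) _) hs (by positivity)
        rwa [← Real.rpow_mul (by linarith), mul_one_div, div_self hc1ne,
          Real.rpow_one] at this
      have : u / (c-1)^2 ≤ (1/(c-1)) * u - 2 * Real.logb 2 (c-1) := by
        have e : (1/(c-1)) * u - 2 * Real.logb 2 (c-1)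
            = (u*(c-1) - 2 * Real.logb 2 (c-1) * (c-1)^2)/(c-1)^2 := by
          field_simp
        rw [e, div_le_div_iff_of_pos_right (by positivity)]
        have h3 : 2 * Real.logb 2 (c-1) * (c-1)^2 ≤ (c-1) * (c-1)^2 :=
          mul_le_mul_of_nonneg_right hnum (sq_nonneg _)
        nlinarith
      calc nseq (i+k+1) ^ (1/(c-1)) / (c-1)^2 = u / (c-1)^2 := rfl
        _ ≤ (1/(c-1)) * u - 2 * Real.logb 2 (c-1) := this
        _ = (1/(c-1)) * Real.logb 2 (nseq (i+k)) - 2 * Real.logb 2 (c-1) := by rw [hlogt]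
        _ = Real.logb 2 (nseq (i+k) ^ (1/(c-1)) / (c-1)^2) := hsplit.symm
        _ ≤ _ := hmono
  -- now conclude
  have hne : {k : ℕ | (Real.logb 2)^[k] (nseq i) ≤ 1}.Nonempty := exists_iter_le_one _
  by_contra hlt
  push_neg at hlt
  have hmem := Nat.sInf_mem hne
  set k := sInf {k : ℕ | (Real.logb 2)^[k] (nseq i) ≤ 1} with hkdef
  have hk1 : (Real.logb 2)^[k] (nseq i) ≤ 1 := hmem
  have hklt : k < m - i := hlt
  have hikm : i + k ≤ m - 1 := by omega
  rcases Nat.eq_zero_or_pos k with hk0 | hkpos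
  · rw [hk0] at hk1
    simp at hk1
    have := hm i hi him
    have hMgt : (1:ℝ) < M := by
      calc (1:ℝ) = 1 ^ (c-1) := (Real.one_rpow _).symm
      _ < (c^2+c) ^ (c-1) := by
        apply Real.rpow_lt_rpow (by norm_num) (by linarith) (by linarith)
    linarith
  · have h := hA k hkpos hikm
    have hs : M ≤ nseq (i+k) := hm (i+k) (by omega) hikm
    have hularge : c^2 + c ≤ nseq (i+k) ^ (1/(c-1)) := by
      have : ((c^2+c) ^ (c-1)) ^ (1/(c-1)) ≤ nseq (i+k) ^ (1/(c-1)) :=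
        Real.rpow_le_rpow (Real.rpow_nonneg (by linarith) _) hs (by positivity)
      rwa [← Real.rpow_mul (by linarith), mul_one_div, div_self hc1ne,
        Real.rpow_one] at this
    have hgt1 : (1:ℝ) < nseq (i+k) ^ (1/(c-1)) / (c-1)^2 := by
      rw [lt_div_iff₀ (by positivity)]
      nlinarith
    linarith
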